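/- Let p > 1, λ ∈ ℂ with Im λ < 0, and let V : [0,∞) → ℂ solve i V'(s) = λ |V(s)|^{p-1} V(s). Then for all s ≥ 0, |V(s)| ≤ |V(0)| (1 - (p-1)(Im λ)|V(0)|^{p-1} s)^{-1/(p-1)}; in particular |V(s)| ≤ C (1 + s|Im λ|)^{-1/(p-1)} for a constant C depending on p and |V(0)|. -/

import Mathlib

open Real Set

theorem stmt_10 (p : ℝ) (lam : ℂ) (V : ℝ → ℂ)
    (hp : 1 < p) (hlam : lam.im < 0)
    (hODE : ∀ s : ℝ, 0 ≤ s →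
      HasDerivAt V (-Complex.I * (lam * ((‖V s‖ ^ (p - 1) : ℝ) : ℂ) * V s)) s) :
    (∀ s : ℝ, 0 ≤ s →
      ‖V s‖ ≤
        ‖V 0‖ *
          (1 - (p - 1) * lam.im * ‖V 0‖ ^ (p - 1) * s) ^ (-1 / (p - 1))) ∧
    ∃ C : ℝ, 0 < C ∧ ∀ s : ℝ, 0 ≤ s →
      ‖V s‖ ≤ C * (1 + s * |lam.im|) ^ (-1 / (p - 1)) := by
  have hq : (0:ℝ) < p - 1 := by linarith
  set a : ℝ := ‖V 0‖ with ha
  have ha0 : 0 ≤ a := norm_nonneg _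
  set m : ℝ := -((p - 1) * lam.im) with hmdef
  have hm : 0 < m := by
    have : (p - 1) * lam.im < 0 := mul_neg_of_pos_of_neg hq hlam
    linarith
  set w0 : ℝ := a ^ (p - 1) with hw0def
  have hw00 : 0 ≤ w0 := Real.rpow_nonneg ha0 _
  -- derivative of normSq ∘ V
  have hr : ∀ s, 0 ≤ s → HasDerivAt (fun t => Complex.normSq (V t))
      (2 * lam.im * (‖V s‖) ^ (p - 1) * Complex.normSq (V s)) s := by
    intro s hs
    have hV := hODE s hs
    set v := -Complex.I * (lam * ((‖V s‖ ^ (p - 1) : ℝ) : ℂ) * V s) with hv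
    have hre : HasDerivAt (fun t => (V t).re) v.re s :=
      Complex.reCLM.hasFDerivAt.comp_hasDerivAt s hV
    have him : HasDerivAt (fun t => (V t).im) v.im s :=
      Complex.imCLM.hasFDerivAt.comp_hasDerivAt s hV
    have h := (hre.mul hre).add (him.mul him)
    have heq : (((fun t => (V t).re) * fun t => (V t).re) + (fun t => (V t).im) * fun t => (V t).im)
        = fun t => Complex.normSq (V t) := by
      funext t; simp [Complex.normSq_apply, Pi.add_apply, Pi.mul_apply]
    rw [heq] at h
    refine h.congr_deriv ?_
    simp only [hv, Complex.normSq_apply, Complex.mul_re, Complex.mul_im, Complex.neg_re,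
      Complex.neg_im, Complex.I_re, Complex.I_im, Complex.ofReal_re, Complex.ofReal_im]
    ring
  -- normSq ∘ V is antitone on Ici 0
  have hanti : AntitoneOn (fun t => Complex.normSq (V t)) (Ici (0:ℝ)) := by
    apply antitoneOn_of_deriv_nonpos (convex_Ici 0)
    · intro t ht
      exact (hr t ht).continuousAt.continuousWithinAt
    · intro t ht
      rw [interior_Ici] at ht
      exact (hr t (le_of_lt ht)).differentiableAt.differentiableWithinAt
    · intro t ht
      rw [interior_Ici] at ht
      rw [(hr t (le_of_lt ht)).deriv]
      have h1 : 0 ≤ (‖V t‖) ^ (p - 1) := Real.rpow_nonneg (norm_nonneg _) _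
      have h2 : 0 ≤ Complex.normSq (V t) := Complex.normSq_nonneg _
      rw [mul_assoc]
      exact mul_nonpos_iff.mpr (Or.inr ⟨by linarith, mul_nonneg h1 h2⟩)
  have habs_le : ∀ s : ℝ, 0 ≤ s → ‖V s‖ ≤ a := by
    intro s hs
    have h := hanti (self_mem_Ici) hs hs
    rw [ha, Complex.norm_def, Complex.norm_def]
    exact Real.sqrt_le_sqrt h
  -- Key equality on intervals where V doesn't vanish
  have key : ∀ b : ℝ, 0 ≤ b → (∀ t ∈ Icc (0:ℝ) b, V t ≠ 0) →
      (‖V b‖) ^ (p - 1) * (1 + m * w0 * b) = w0 := by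
    intro b hb hpos
    set w : ℝ → ℝ := fun t => (‖V t‖) ^ (p - 1) with hwdef
    set F : ℝ → ℝ := fun t => w t * (1 + m * w0 * t) with hFdef
    -- derivative of w at points of positivity
    have hwderiv : ∀ t ∈ Icc (0:ℝ) b, HasDerivAt w (-m * (w t) ^ 2) t := by
      intro t ht
      have hVt : V t ≠ 0 := hpos t ht
      have hAt : 0 < ‖V t‖ := norm_pos_iff.mpr hVt
      have hnsq : Complex.normSq (V t) ≠ 0 := fun h => hVt (Complex.normSq_eq_zero.mp h)
      -- derivative of abs ∘ V
      have hsqrt := (Real.hasDerivAt_sqrt hnsq).comp t (hr t ht.1)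
      have heqf : (Real.sqrt ∘ fun t => Complex.normSq (V t)) = fun t => ‖V t‖ := by
        funext u; simp [Function.comp, Complex.norm_def]
      rw [heqf] at hsqrt
      have habsval : Real.sqrt (Complex.normSq (V t)) = ‖V t‖ :=
        (Complex.norm_def _).symm
      have hA : HasDerivAt (fun u => ‖V u‖) (lam.im * (‖V t‖) ^ p) t := by
        refine hsqrt.congr_deriv ?_
        rw [habsval]
        have hns : Complex.normSq (V t) = ‖V t‖ * ‖V t‖ := by
          rw [← Complex.sq_norm, sq]
        have hsplit : ‖V t‖ ^ p = ‖V t‖ ^ (p - 1) * ‖V t‖ := by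
          rw [← Real.rpow_add_one hAt.ne' (p - 1)]; ring_nf
        rw [hns, hsplit]
        field_simp
      -- derivative of rpow composition
      have hrp := (Real.hasDerivAt_rpow_const (x := ‖V t‖) (p := p - 1)
        (Or.inl hAt.ne')).comp t hA
      have heqw : ((fun x => x ^ (p - 1)) ∘ fun u => ‖V u‖) = w := rfl
      rw [heqw] at hrp
      refine hrp.congr_deriv ?_
      have h2 : ‖V t‖ ^ (p - 1) * ‖V t‖ ^ (p - 1)
          = ‖V t‖ ^ (p - 1 - 1) * ‖V t‖ ^ p := by
        rw [← Real.rpow_add hAt, ← Real.rpow_add hAt]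
        congr 1; ring
      simp only [hwdef]
      rw [sq, h2, hmdef]
      ring
    -- F - w0 has derivative -m * w t * (F t - w0)
    have hFderiv : ∀ t ∈ Icc (0:ℝ) b,
        HasDerivAt (fun u => F u - w0) (-m * w t * (F t - w0)) t := by
      intro t ht
      have hlin : HasDerivAt (fun u : ℝ => 1 + m * w0 * u) (m * w0) t := by
        simpa using ((hasDerivAt_id t).const_mul (m * w0)).const_add 1
      have h := ((hwderiv t ht).mul hlin).sub_const w0
      refine h.congr_deriv ?_
      simp only [hFdef]
      ring
    -- apply Gronwall with δ = 0, ε = 0, K = m * w0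
    have hcont : ContinuousOn (fun u => F u - w0) (Icc 0 b) := fun t ht =>
      ((hFderiv t ht).continuousAt).continuousWithinAt
    have hF0 : F 0 - w0 = 0 := by
      simp only [hFdef, hwdef]
      rw [← ha, ← hw0def]
      ring
    have hbound : ∀ t ∈ Ico (0:ℝ) b, ‖-m * w t * (F t - w0)‖ ≤ m * w0 * ‖F t - w0‖ + 0 := by
      intro t ht
      have hw_le : w t ≤ w0 := by
        simp only [hwdef]
        exact Real.rpow_le_rpow (norm_nonneg _) (habs_le t ht.1) hq.le
      have hw_nn : 0 ≤ w t := Real.rpow_nonneg (norm_nonneg _) _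
      have hnorm : ‖-m * w t * (F t - w0)‖ = m * w t * ‖F t - w0‖ := by
        rw [norm_mul, norm_mul, Real.norm_eq_abs, Real.norm_eq_abs, abs_neg, abs_of_pos hm,
          abs_of_nonneg hw_nn]
      rw [hnorm, add_zero]
      exact mul_le_mul_of_nonneg_right (mul_le_mul_of_nonneg_left hw_le hm.le)
        (norm_nonneg _)
    have hG := norm_le_gronwallBound_of_norm_deriv_right_le (δ := 0) (K := m * w0) (ε := 0) hcont
      (fun t ht => (hFderiv t ⟨ht.1, ht.2.le⟩).hasDerivWithinAt)
      (by simp [hF0]) hbound b ⟨hb, le_refl b⟩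
    rw [gronwallBound_ε0] at hG
    have hFb : F b - w0 = 0 := by
      have h0 : ‖F b - w0‖ ≤ 0 := by simpa using hG
      have h1 := norm_nonneg (F b - w0)
      exact norm_eq_zero.mp (le_antisymm h0 h1)
    have hFb' : F b = w0 := by linarith
    rw [hFdef] at hFb'
    exact hFb'
  -- Part 1
  have part1 : ∀ s : ℝ, 0 ≤ s →
      ‖V s‖ ≤ a * (1 - (p - 1) * lam.im * a ^ (p - 1) * s) ^ (-1 / (p - 1)) := by
    intro s hs
    have hbase : 1 - (p - 1) * lam.im * a ^ (p - 1) * s = 1 + m * w0 * s := by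
      rw [hmdef, hw0def]; ring
    rw [hbase]
    have hmw0 : 0 ≤ m * w0 * s := mul_nonneg (mul_nonneg hm.le hw00) hs
    have hB1 : (1:ℝ) ≤ 1 + m * w0 * s := by linarith
    have hB0 : (0:ℝ) < 1 + m * w0 * s := by linarith
    by_cases hcase : ∀ t ∈ Icc (0:ℝ) s, V t ≠ 0
    · have hFs := key s hs hcase
      have hws : (‖V s‖) ^ (p - 1) = w0 / (1 + m * w0 * s) := by
        rw [eq_div_iff hB0.ne']
        exact hFs
      have hA0 : 0 ≤ ‖V s‖ := norm_nonneg _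
      have hval := congrArg (fun x : ℝ => x ^ (p - 1)⁻¹) hws
      rw [Real.rpow_rpow_inv hA0 (ne_of_gt hq)] at hval
      rw [hval]
      rw [Real.div_rpow hw00 hB0.le, hw0def,
        Real.rpow_rpow_inv ha0 (ne_of_gt hq)]
      rw [neg_div, one_div, Real.rpow_neg hB0.le]
      exact le_of_eq (by rw [div_eq_mul_inv])
    · push_neg at hcase
      obtain ⟨t, ht, hVt⟩ := hcase
      have hts : Complex.normSq (V s) ≤ Complex.normSq (V t) :=
        hanti ht.1 hs ht.2
      have hns0 : Complex.normSq (V s) = 0 := by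
        have h1 := Complex.normSq_nonneg (V s)
        simp [hVt] at hts
        linarith
      have hVs : ‖V s‖ = 0 := by
        rw [Complex.norm_def, hns0, Real.sqrt_zero]
      rw [hVs]
      exact mul_nonneg ha0 (Real.rpow_nonneg hB0.le _)
  constructor
  · intro s hs; exact part1 s hs
  -- Part 2
  · rcases eq_or_lt_of_le ha0 with hA | hA
    · refine ⟨1, one_pos, fun s hs => ?_⟩
      have h1 := part1 s hs
      rw [← hA] at h1
      simp only [zero_mul] at h1
      have hb0 : (0:ℝ) < 1 + s * |lam.im| := by
        have : 0 ≤ s * |lam.im| := mul_nonneg hs (abs_nonneg _)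
        linarith
      have := Real.rpow_nonneg hb0.le (-1 / (p - 1))
      linarith
    · set c : ℝ := (p - 1) * w0 with hcdef
      have hc : 0 < c := by
        apply mul_pos hq
        rw [hw0def]; exact Real.rpow_pos_of_pos hA _
      set K : ℝ := max 1 c⁻¹ with hKdef
      have hK1 : (1:ℝ) ≤ K := le_max_left _ _
      have hKc : c⁻¹ ≤ K := le_max_right _ _
      have hK0 : 0 < K := lt_of_lt_of_le one_pos hK1
      refine ⟨a * K ^ (p - 1)⁻¹, mul_pos hA (Real.rpow_pos_of_pos hK0 _), fun s hs => ?_⟩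
      have h1 := part1 s hs
      set x : ℝ := s * |lam.im| with hxdef
      have hx0 : 0 ≤ x := mul_nonneg hs (abs_nonneg _)
      have hbase : 1 - (p - 1) * lam.im * a ^ (p - 1) * s = 1 + c * x := by
        rw [hcdef, hxdef, hw0def, abs_of_neg hlam]; ring
      rw [hbase] at h1
      have hcx0 : (0:ℝ) < 1 + c * x := by nlinarith
      have hx1 : (0:ℝ) < 1 + x := by linarith
      -- 1 + x ≤ K * (1 + c*x)
      have hcomp : 1 + x ≤ K * (1 + c * x) := by
        have h2 : c⁻¹ * (c * x) = x := by field_simp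
        have h3 : c⁻¹ * (c * x) ≤ K * (c * x) :=
          mul_le_mul_of_nonneg_right hKc (by positivity)
        nlinarith
      -- raise to power (p-1)⁻¹
      have hmono := Real.rpow_le_rpow hx1.le hcomp (by positivity : (0:ℝ) ≤ (p-1)⁻¹)
      rw [Real.mul_rpow hK0.le hcx0.le] at hmono
      set e : ℝ := (p - 1)⁻¹ with hedef
      have hu : 0 < (1 + c * x) ^ e := Real.rpow_pos_of_pos hcx0 _
      have hv : 0 < (1 + x) ^ e := Real.rpow_pos_of_pos hx1 _
      have hneg : ∀ y : ℝ, 0 < y → y ^ (-1 / (p - 1)) = (y ^ e)⁻¹ := by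
        intro y hy
        rw [neg_div, one_div, ← hedef, Real.rpow_neg hy.le]
      have h4 : (1 + x) ^ e * ((1 + c * x) ^ e)⁻¹ ≤ K ^ e := by
        rw [← div_eq_mul_inv, div_le_iff₀ hu]
        exact hmono
      have hinv : ((1 + c * x) ^ e)⁻¹ ≤ K ^ e * ((1 + x) ^ e)⁻¹ := by
        calc ((1 + c * x) ^ e)⁻¹
            = ((1 + x) ^ e)⁻¹ * ((1 + x) ^ e * ((1 + c * x) ^ e)⁻¹) := by
              field_simp
          _ ≤ ((1 + x) ^ e)⁻¹ * K ^ e :=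
              mul_le_mul_of_nonneg_left h4 (inv_nonneg.mpr hv.le)
          _ = K ^ e * ((1 + x) ^ e)⁻¹ := mul_comm _ _
      calc ‖V s‖ ≤ a * (1 + c * x) ^ (-1 / (p - 1)) := h1
        _ = a * ((1 + c * x) ^ e)⁻¹ := by rw [hneg _ hcx0]
        _ ≤ a * (K ^ e * ((1 + x) ^ e)⁻¹) :=
            mul_le_mul_of_nonneg_left hinv ha0
        _ = a * K ^ e * (1 + x) ^ (-1 / (p - 1)) := by rw [hneg _ hx1]; ring
        _ = a * K ^ (p - 1)⁻¹ * (1 + s * |lam.im|) ^ (-1 / (p - 1)) := by rw [hedef, hxdef]
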